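/- For every real N ≥ 2, ∑_{p ≤ N, p prime} (log p)/p < 2 + log N. -/

import Mathlib

lemma aux_prod_dvd (s : Finset ℕ) (f : ℕ → ℕ) (m : ℕ)
    (hcop : ∀ p ∈ s, ∀ q ∈ s, p ≠ q → Nat.Coprime (f p) (f q))
    (hdvd : ∀ p ∈ s, f p ∣ m) : ∏ p ∈ s, f p ∣ m := by
  induction s using Finset.induction_on with
  | empty => simpa using one_dvd m
  | insert a s' ha ih =>
    rw [Finset.prod_insert ha]
    apply Nat.Coprime.mul_dvd_of_dvd_of_dvd
    · exact Nat.Coprime.prod_right fun q hq =>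
        hcop a (Finset.mem_insert_self a s') q (Finset.mem_insert_of_mem hq)
          (fun h => ha (h ▸ hq))
    · exact hdvd a (Finset.mem_insert_self a s')
    · exact ih (fun p hp q hq hpq => hcop p (Finset.mem_insert_of_mem hp) q
        (Finset.mem_insert_of_mem hq) hpq)
        (fun p hp => hdvd p (Finset.mem_insert_of_mem hp))

theorem stmt4 (N : ℝ) (hN : 2 ≤ N) :
    ∑ p ∈ (Finset.range (⌊N⌋₊ + 1)).filter Nat.Prime, Real.log p / p <
      2 + Real.log N := by
  set n := ⌊N⌋₊ with hn_def
  have hn2 : 2 ≤ n := Nat.le_floor (by exact_mod_cast hN)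
  have hn0 : (0:ℝ) < n := by exact_mod_cast (by omega : 0 < n)
  set S := (Finset.range (n + 1)).filter Nat.Prime with hS
  have hmem : ∀ p ∈ S, p.Prime ∧ p ≤ n := by
    intro p hp
    rw [hS, Finset.mem_filter, Finset.mem_range] at hp
    exact ⟨hp.2, by omega⟩
  -- A : ∑ (n/p) log p ≤ log n!
  have hdvd : (∏ p ∈ S, p ^ (n / p)) ∣ Nat.factorial n := by
    apply aux_prod_dvd
    · intro p hp q hq hpq
      exact Nat.Coprime.pow _ _ ((Nat.coprime_primes (hmem p hp).1 (hmem q hq).1).mpr hpq)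
    · intro p hp
      obtain ⟨hpp, hpn⟩ := hmem p hp
      rw [Nat.Prime.pow_dvd_factorial_iff hpp (lt_add_one _)]
      have h1 : 1 ∈ Finset.Ico 1 (Nat.log p n + 1) := by
        rw [Finset.mem_Ico]
        refine ⟨le_refl _, ?_⟩
        have := Nat.log_pos hpp.one_lt (by omega : p ≤ n)
        omega
      calc n / p = n / p ^ 1 := by rw [pow_one]
        _ ≤ _ := Finset.single_le_sum (f := fun i => n / p ^ i)
            (fun i _ => Nat.zero_le _) h1
  have hA : ∑ p ∈ S, ((n / p : ℕ) : ℝ) * Real.log p ≤ Real.log (Nat.factorial n : ℕ) := by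
    have hle : ((∏ p ∈ S, p ^ (n / p) : ℕ) : ℝ) ≤ ((Nat.factorial n : ℕ) : ℝ) := by
      exact_mod_cast Nat.le_of_dvd (Nat.factorial_pos n) hdvd
    have hpos : (0:ℝ) < ((∏ p ∈ S, p ^ (n / p) : ℕ) : ℝ) := by
      have : 0 < ∏ p ∈ S, p ^ (n / p) :=
        Finset.prod_pos fun p hp => pow_pos (hmem p hp).1.pos _
      exact_mod_cast this
    have := Real.log_le_log hpos hle
    calc ∑ p ∈ S, ((n / p : ℕ) : ℝ) * Real.log p
        = Real.log ((∏ p ∈ S, p ^ (n / p) : ℕ) : ℝ) := by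
          push_cast
          rw [Real.log_prod (fun p hp =>
            pow_ne_zero _ (by exact_mod_cast (hmem p hp).1.pos.ne'))]
          simp [Real.log_pow]
      _ ≤ _ := this
  -- B : log n! ≤ n log n
  have hB : Real.log (Nat.factorial n : ℕ) ≤ (n : ℝ) * Real.log n := by
    have hle : ((Nat.factorial n : ℕ) : ℝ) ≤ ((n : ℝ)) ^ n := by
      exact_mod_cast Nat.factorial_le_pow n
    calc Real.log (Nat.factorial n : ℕ) ≤ Real.log ((n:ℝ) ^ n) :=
          Real.log_le_log (by exact_mod_cast Nat.factorial_pos n) hle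
      _ = (n : ℝ) * Real.log n := by rw [Real.log_pow]
  -- C : ∑ log p ≤ n log 4
  have hC : ∑ p ∈ S, Real.log p ≤ (n : ℝ) * Real.log 4 := by
    have h1 : (primorial n : ℝ) = ∏ p ∈ S, (p : ℝ) := by
      rw [primorial]; push_cast; rfl
    have h2 : ((primorial n : ℕ) : ℝ) ≤ ((4 ^ n : ℕ) : ℝ) := by
      exact_mod_cast primorial_le_4_pow n
    calc ∑ p ∈ S, Real.log p
        = Real.log ((primorial n : ℕ) : ℝ) := by
          rw [h1, Real.log_prod (fun p hp =>
            by exact_mod_cast (hmem p hp).1.pos.ne')]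
      _ ≤ Real.log ((4 ^ n : ℕ) : ℝ) :=
          Real.log_le_log (by exact_mod_cast primorial_pos n) h2
      _ = (n : ℝ) * Real.log 4 := by rw [Nat.cast_pow, Real.log_pow]; norm_num
  -- pointwise strict bound
  have key : ∀ p ∈ S, Real.log p / p <
      (((n / p : ℕ) : ℝ) + 1) * Real.log p / n := by
    intro p hp
    obtain ⟨hpp, hpn⟩ := hmem p hp
    have hp0 : (0:ℝ) < p := by exact_mod_cast hpp.pos
    have hlogp : 0 < Real.log p := Real.log_pos (by exact_mod_cast hpp.one_lt)
    have hfloor : (n : ℝ) / p < ((n / p : ℕ) : ℝ) + 1 := by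
      rw [div_lt_iff₀ hp0]
      have hq := Nat.div_add_mod n p
      have hr := Nat.mod_lt n hpp.pos
      have hnat : n < (n / p + 1) * p := by
        calc n = p * (n / p) + n % p := hq.symm
          _ < p * (n / p) + p := by omega
          _ = (n / p + 1) * p := by ring
      exact_mod_cast hnat
    rw [div_lt_div_iff₀ hp0 hn0]
    calc Real.log p * n = (n : ℝ) / p * Real.log p * p := by field_simp
      _ < (((n / p : ℕ) : ℝ) + 1) * Real.log p * p := by
          apply mul_lt_mul_of_pos_right _ hp0
          exact mul_lt_mul_of_pos_right hfloor hlogp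
  have hne : S.Nonempty := by
    refine ⟨2, ?_⟩
    rw [hS, Finset.mem_filter, Finset.mem_range]
    exact ⟨by omega, Nat.prime_two⟩
  have hlog4 : Real.log 4 < 2 := by
    have h4 : (4:ℝ) = 2 ^ 2 := by norm_num
    rw [h4, Real.log_pow]
    have := Real.log_two_lt_d9
    push_cast
    nlinarith
  have hlogn : Real.log n ≤ Real.log N := by
    apply Real.log_le_log hn0
    exact Nat.floor_le (by linarith)
  calc ∑ p ∈ S, Real.log p / p
      < ∑ p ∈ S, (((n / p : ℕ) : ℝ) + 1) * Real.log p / n :=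
        Finset.sum_lt_sum_of_nonempty hne key
    _ = (∑ p ∈ S, ((n / p : ℕ) : ℝ) * Real.log p + ∑ p ∈ S, Real.log p) / n := by
        rw [← Finset.sum_add_distrib, ← Finset.sum_div]
        congr 1
        apply Finset.sum_congr rfl
        intro p hp
        ring
    _ ≤ ((n : ℝ) * Real.log n + (n : ℝ) * Real.log 4) / n := by
        gcongr <;> first
          | exact hA.trans hB
          | exact hC
    _ = Real.log n + Real.log 4 := by field_simp
    _ < 2 + Real.log N := by linarith
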